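/- Let $A = kQ_n$ be the path algebra of the Kronecker-type quiver $Q_n$ with two vertices $e_1, e_2$ and $n$ arrows from $e_2$ to $e_1$, and let $\otimes$ denote the vertex-wise tensor product of right $A$-modules (i.e. $(M \otimes N)_v = M_v \otimes N_v$ and $f^{M\otimes N}_x = f^M_x \otimes f^N_x$). Then $e_1 A \otimes e_1 A \cong e_1 A \oplus (e_2 A)^{n^2 - n}$, $e_1 A \otimes e_2 A \cong (e_2 A)^n$, and $e_2 A \otimes e_2 A \cong e_2 A$. -/

import Mathlib

open scoped TensorProduct

/-- A representation of the quiver `Qₙ` (two vertices `e₁, e₂` and `n` arrows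
`x₁, …, xₙ` from `e₂` to `e₁`), equivalently a right module over the path algebra
`kQₙ`: a pair of vector spaces `(M₁, M₂) = (M_{e₁}, M_{e₂})` together with `n` linear
maps `M₁ → M₂` (the right actions of the arrows). -/
structure QRep (k : Type) [Field k] (n : ℕ) where
  M1 : Type
  M2 : Type
  acg1 : AddCommGroup M1
  acg2 : AddCommGroup M2
  mod1 : Module k M1
  mod2 : Module k M2
  f : Fin n → M1 →ₗ[k] M2

attribute [instance] QRep.acg1 QRep.acg2 QRep.mod1 QRep.mod2

variable {k : Type} [Field k] {n : ℕ}

/-- The vertex-wise tensor product of two representations of `Qₙ`: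
`(M ⊗ N)_v = M_v ⊗ N_v` and `f_x^{M⊗N} = f_x^M ⊗ f_x^N`. -/
noncomputable def QRep.tensor (A B : QRep k n) : QRep k n where
  M1 := A.M1 ⊗[k] B.M1
  M2 := A.M2 ⊗[k] B.M2
  acg1 := inferInstance
  acg2 := inferInstance
  mod1 := inferInstance
  mod2 := inferInstance
  f i := TensorProduct.map (A.f i) (B.f i)

/-- The direct sum of two representations of `Qₙ`. -/
def QRep.dsum (A B : QRep k n) : QRep k n where
  M1 := A.M1 × B.M1
  M2 := A.M2 × B.M2
  acg1 := inferInstance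
  acg2 := inferInstance
  mod1 := inferInstance
  mod2 := inferInstance
  f i := (A.f i).prodMap (B.f i)

/-- The indecomposable projective `e₁A`: `(e₁A)_{e₁} = k`, `(e₁A)_{e₂} = kⁿ`, with the
arrow `xᵢ` acting by the `i`-th coordinate inclusion `k → kⁿ`. -/
def e1A (k : Type) [Field k] (n : ℕ) : QRep k n where
  M1 := k
  M2 := Fin n → k
  acg1 := inferInstance
  acg2 := inferInstance
  mod1 := inferInstance
  mod2 := inferInstance
  f i := LinearMap.single k (fun _ : Fin n => k) i

/-- The direct sum of `m` copies of the indecomposable projective `e₂A`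
(`(e₂A)_{e₁} = 0`, `(e₂A)_{e₂} = k`, arrows acting by `0`); so `e2pow k n 1 = e₂A`. -/
def e2pow (k : Type) [Field k] (n m : ℕ) : QRep k n where
  M1 := Fin 0 → k
  M2 := Fin m → k
  acg1 := inferInstance
  acg2 := inferInstance
  mod1 := inferInstance
  mod2 := inferInstance
  f _ := 0

/-- An isomorphism of representations of `Qₙ`: a pair of linear isomorphisms at the two
vertices commuting with the action of every arrow. -/
structure QRepIso (A B : QRep k n) where
  e1 : A.M1 ≃ₗ[k] B.M1
  e2 : A.M2 ≃ₗ[k] B.M2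
  comm : ∀ i : Fin n, (e2 : A.M2 →ₗ[k] B.M2).comp (A.f i) = (B.f i).comp (e1 : A.M1 →ₗ[k] B.M1)


noncomputable def tensorPiEquiv (k : Type) [Field k] (a b : ℕ) :
    ((Fin a → k) ⊗[k] (Fin b → k)) ≃ₗ[k] (Fin a × Fin b → k) :=
  (TensorProduct.congr (Finsupp.linearEquivFunOnFinite k k (Fin a)).symm
    (Finsupp.linearEquivFunOnFinite k k (Fin b)).symm).trans
  ((finsuppTensorFinsupp' k (Fin a) (Fin b)).trans
    (Finsupp.linearEquivFunOnFinite k k _))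

lemma linEqFOF_symm_single (a : ℕ) (i : Fin a) (x : k) :
    (Finsupp.linearEquivFunOnFinite k k (Fin a)).symm (Pi.single i x) = Finsupp.single i x := by
  apply (Finsupp.linearEquivFunOnFinite k k (Fin a)).injective
  simp

lemma tensorPiEquiv_single (a b : ℕ) (i : Fin a) (j : Fin b) (x y : k) :
    tensorPiEquiv k a b (Pi.single i x ⊗ₜ[k] Pi.single j y) = Pi.single (i, j) (x * y) := by
  simp [tensorPiEquiv, TensorProduct.congr, linEqFOF_symm_single,
    finsuppTensorFinsupp'_single_tmul_single]
  ext p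
  simp only [Finsupp.mul_apply, Finsupp.linearEquivFunOnFinite_apply, Finsupp.single_apply,
    Pi.single_apply]
  split <;> simp_all [eq_comm]

def diagEquiv (n : ℕ) : Fin n ≃ {p : Fin n × Fin n // p.1 = p.2} where
  toFun i := ⟨(i, i), rfl⟩
  invFun p := p.1.1
  left_inv i := rfl
  right_inv := by rintro ⟨⟨a, b⟩, h : a = b⟩; cases h; rfl

noncomputable def offDiagEquiv (n : ℕ) : {p : Fin n × Fin n // ¬ p.1 = p.2} ≃ Fin (n ^ 2 - n) :=
  Fintype.equivFinOfCardEq (by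
    rw [Fintype.card_subtype_compl, ← Fintype.card_congr (diagEquiv n)]
    simp [sq])

noncomputable def sqEquiv (n : ℕ) : Fin n × Fin n ≃ Fin n ⊕ Fin (n ^ 2 - n) :=
  ((Equiv.sumCompl (fun p : Fin n × Fin n => p.1 = p.2)).symm).trans
    (Equiv.sumCongr (diagEquiv n).symm (offDiagEquiv n))

lemma sqEquiv_symm_inl (n : ℕ) (i : Fin n) : (sqEquiv n).symm (Sum.inl i) = (i, i) := rfl

lemma sqEquiv_symm_inr (n : ℕ) (m : Fin (n ^ 2 - n)) :
    ¬ ((sqEquiv n).symm (Sum.inr m)).1 = ((sqEquiv n).symm (Sum.inr m)).2 :=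
  ((offDiagEquiv n).symm m).2

def sumArrowLEquiv (k : Type) [Field k] (α β : Type) :
    (α ⊕ β → k) ≃ₗ[k] (α → k) × (β → k) :=
  { Equiv.sumArrowEquivProdArrow α β k with
    map_add' := fun _ _ => rfl
    map_smul' := fun _ _ => rfl }

noncomputable def e2one (k : Type) [Field k] (n : ℕ) :
    ((Fin n → k) ⊗[k] (Fin n → k)) ≃ₗ[k] (Fin n → k) × (Fin (n ^ 2 - n) → k) :=
  (tensorPiEquiv k n n).trans ((LinearEquiv.funCongrLeft k k (sqEquiv n).symm).trans
    (sumArrowLEquiv k _ _))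

lemma e2one_single (i : Fin n) (x y : k) :
    e2one k n (Pi.single i x ⊗ₜ[k] Pi.single i y) = (Pi.single i (x * y), 0) := by
  simp only [e2one, LinearEquiv.trans_apply, tensorPiEquiv_single]
  ext j
  · show (Pi.single (i, i) (x * y) ∘ (sqEquiv n).symm) (Sum.inl j) = _
    simp only [Function.comp_apply]
    rw [sqEquiv_symm_inl]
    simp [Pi.single_apply, Prod.ext_iff]
  · show (Pi.single (i, i) (x * y) ∘ (sqEquiv n).symm) (Sum.inr j) = 0
    simp only [Function.comp_apply]
    rw [Pi.single_apply, if_neg]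
    intro h
    exact sqEquiv_symm_inr n j (by rw [h])

def prodZeroEquiv (k : Type) [Field k] : k ≃ₗ[k] k × (Fin 0 → k) where
  toFun x := (x, 0)
  invFun p := p.1
  map_add' _ _ := Prod.ext rfl (Subsingleton.elim _ _)
  map_smul' _ _ := Prod.ext rfl (Subsingleton.elim _ _)
  left_inv _ := rfl
  right_inv p := Prod.ext rfl (Subsingleton.elim _ _)

/- STATEMENT 3: for the quiver `Qₙ` and the vertex-wise tensor product of right
`kQₙ`-modules:
`e₁A ⊗ e₁A ≅ e₁A ⊕ (e₂A)^{n² - n}`, `e₁A ⊗ e₂A ≅ (e₂A)ⁿ`, `e₂A ⊗ e₂A ≅ e₂A`. -/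
theorem stmt_3 (k : Type) [Field k] (n : ℕ) :
    Nonempty (QRepIso ((e1A k n).tensor (e1A k n))
        ((e1A k n).dsum (e2pow k n (n ^ 2 - n)))) ∧
    Nonempty (QRepIso ((e1A k n).tensor (e2pow k n 1)) (e2pow k n n)) ∧
    Nonempty (QRepIso ((e2pow k n 1).tensor (e2pow k n 1)) (e2pow k n 1)) := by
  refine ⟨⟨⟨(TensorProduct.lid k k).trans (prodZeroEquiv k), e2one k n, ?_⟩⟩,
    ⟨⟨TensorProduct.lid k (Fin 0 → k),
      (TensorProduct.congr (LinearEquiv.refl k (Fin n → k))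
        (LinearEquiv.funUnique (Fin 1) k k)).trans (TensorProduct.rid k _), ?_⟩⟩,
    ⟨⟨(LinearEquiv.ofSubsingleton _ _ :
        ((Fin 0 → k) ⊗[k] (Fin 0 → k)) ≃ₗ[k] (Fin 0 → k)),
      ((TensorProduct.congr (LinearEquiv.funUnique (Fin 1) k k)
        (LinearEquiv.funUnique (Fin 1) k k)).trans (TensorProduct.lid k k)).trans
        (LinearEquiv.funUnique (Fin 1) k k).symm, ?_⟩⟩⟩
  · intro i
    apply TensorProduct.ext'
    intro (x : k) (y : k)
    show e2one k n ((LinearMap.single k _ i) x ⊗ₜ[k] (LinearMap.single k _ i) y) = _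
    rw [LinearMap.single_apply, LinearMap.single_apply, e2one_single]
    show _ = ((LinearMap.single k (fun _ : Fin n => k) i).prodMap (0 : (Fin 0 → k) →ₗ[k] (Fin (n ^ 2 - n) → k))) ((prodZeroEquiv k) ((TensorProduct.lid k k) (x ⊗ₜ[k] y)))
    simp [prodZeroEquiv, smul_eq_mul]
  · intro i
    apply TensorProduct.ext'
    intro (x : k) (y : Fin 0 → k)
    show ((TensorProduct.congr (LinearEquiv.refl k (Fin n → k))
        (LinearEquiv.funUnique (Fin 1) k k)).trans (TensorProduct.rid k _))
      (TensorProduct.map (LinearMap.single k _ i) 0 (x ⊗ₜ[k] y)) = 0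
    rw [TensorProduct.map_tmul, LinearMap.zero_apply, TensorProduct.tmul_zero, LinearEquiv.map_zero]
  · intro i
    apply TensorProduct.ext'
    intro x y
    show (((TensorProduct.congr (LinearEquiv.funUnique (Fin 1) k k)
        (LinearEquiv.funUnique (Fin 1) k k)).trans (TensorProduct.lid k k)).trans
        (LinearEquiv.funUnique (Fin 1) k k).symm)
      (TensorProduct.map (0 : _ →ₗ[k] _) (0 : _ →ₗ[k] _) (x ⊗ₜ[k] y)) = 0
    rw [TensorProduct.map_tmul, LinearMap.zero_apply, TensorProduct.zero_tmul, LinearEquiv.map_zero]
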